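/- Let G be a simple graph and let W_1, …, W_m be finitely many cycles in G. Define an edge coloring c by letting c(e) be the number of indices i such that the edge e is traversed by W_i. Then for every vertex v of G: (1) the sum of c(e) over all edges e incident to v is even, and (2) for every edge e₀ incident to v, c(e₀) is less than or equal to the sum of c(e) over the remaining edges e incident to v. In particular, at every trivalent vertex the three incident edge colors form an admissible triple (even total sum and triangle inequalities). -/
import Mathlib

open Finset

/-- For a closed trail (in particular a cycle), the number of its edges incident to
any vertex is even. -/
lemma even_card_incident_cycle_edges {V : Type*} [Fintype V] [DecidableEq V]
    {G : SimpleGraph V} [DecidableRel G.Adj] {u : V} {p : G.Walk u u}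
    (hp : p.IsTrail) (v : V) :
    Even (((G.incidenceFinset v).filter (· ∈ p.edges)).card) := by
  have hset : (G.incidenceFinset v).filter (· ∈ p.edges)
      = hp.edgesFinset.filter (fun e => v ∈ e) := by
    ext e
    rw [SimpleGraph.incidenceFinset_eq_filter]
    simp only [Finset.mem_filter, SimpleGraph.mem_edgeFinset,
      SimpleGraph.Walk.IsTrail.edgesFinset, Finset.mem_mk, Multiset.mem_coe]
    constructor
    · rintro ⟨⟨he, hv⟩, hmem⟩; exact ⟨hmem, hv⟩
    · rintro ⟨hmem, hv⟩; exact ⟨⟨p.edges_subset_edgeSet hmem, hv⟩, hmem⟩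
  rw [hset]
  have hcount : (hp.edgesFinset.filter (fun e => v ∈ e)).card
      = p.edges.countP (fun e => v ∈ e) := by
    simp [SimpleGraph.Walk.IsTrail.edgesFinset, Finset.filter, Multiset.filter_coe,
      Multiset.coe_card, List.countP_eq_length_filter]
  rw [hcount]
  exact (hp.even_countP_edges_iff v).2 (fun h => absurd rfl h)

/-- Coloring each edge of a simple graph by the number of cycles (from a given
finite family of cycles) traversing it yields a compatible coloring: at every
vertex the sum of the colors of incident edges is even, and each incident edge
color is at most the sum of the colors of the other incident edges. -/
theorem cycle_coloring_admissible {V : Type*} [Fintype V] [DecidableEq V]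
    (G : SimpleGraph V) [DecidableRel G.Adj]
    (m : ℕ) (base : Fin m → V) (W : (i : Fin m) → G.Walk (base i) (base i))
    (hW : ∀ i, (W i).IsCycle)
    (c : Sym2 V → ℕ)
    (hc : ∀ e : Sym2 V, c e = (Finset.univ.filter (fun i => e ∈ (W i).edges)).card)
    (v : V) :
    Even (∑ e ∈ G.incidenceFinset v, c e) ∧
    ∀ e₀ ∈ G.incidenceFinset v,
      c e₀ ≤ ∑ e ∈ (G.incidenceFinset v).erase e₀, c e := by
  -- For each cycle, the set of its edges incident to `v`.
  set s : Fin m → Finset (Sym2 V) :=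
    fun i => (G.incidenceFinset v).filter (· ∈ (W i).edges) with hs
  have hseven : ∀ i, Even (s i).card :=
    fun i => even_card_incident_cycle_edges (hW i).isTrail v
  -- Swapping the order of summation over any subset of the incident edges.
  have hswap : ∀ t : Finset (Sym2 V), ∑ e ∈ t, c e
      = ∑ i : Fin m, (t.filter (· ∈ (W i).edges)).card := by
    intro t
    calc ∑ e ∈ t, c e
        = ∑ e ∈ t, ∑ i : Fin m, (if e ∈ (W i).edges then 1 else 0) := by
          refine Finset.sum_congr rfl fun e _ => ?_
          rw [hc e, Finset.card_filter]
      _ = ∑ i : Fin m, ∑ e ∈ t, (if e ∈ (W i).edges then 1 else 0) :=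
          Finset.sum_comm
      _ = ∑ i : Fin m, (t.filter (· ∈ (W i).edges)).card := by
          refine Finset.sum_congr rfl fun i _ => ?_
          rw [Finset.card_filter]
  constructor
  · rw [hswap]
    exact Finset.even_sum _ (fun i _ => hseven i)
  · intro e₀ he₀
    rw [hc e₀, hswap, Finset.card_filter]
    refine Finset.sum_le_sum fun i _ => ?_
    split_ifs with h
    · -- `e₀` is one of the (evenly many, hence ≥ 2) edges of cycle `i` at `v`,
      -- so another such edge survives the erasure.
      have he₀s : e₀ ∈ s i := Finset.mem_filter.2 ⟨he₀, h⟩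
      have hpos : 0 < (s i).card := Finset.card_pos.2 ⟨e₀, he₀s⟩
      obtain ⟨k, hk⟩ := hseven i
      have h2 : 2 ≤ (s i).card := by omega
      have : ((G.incidenceFinset v).erase e₀).filter (· ∈ (W i).edges)
          = (s i).erase e₀ := Finset.filter_erase _ _ _
      rw [this, Finset.card_erase_of_mem he₀s]
      omega
    · exact Nat.zero_le _
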